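/- For every z ∈ X̄, the following are equivalent: (1) the Jacobian matrix J(z) has rank strictly less than r−c; (2) z is of big type and there exist c+2 indices 0 ≤ i_1 < … < i_{c+2} ≤ r such that each i_q fulfills one of the two conditions: (a) z_{i_q j} = 0 and l_{i_q j} ≥ 2 for at least one j ∈ {1,…,n_{i_q}}, or (b) z_{i_q j} = 0 and l_{i_q j} = 1 for at least two distinct j ∈ {1,…,n_{i_q}}. -/

import Mathlib

open MvPolynomial

noncomputable section

/-- Index type for the variables `T i j` (`Sum.inl ⟨i, j⟩`) and `S k` (`Sum.inr k`). -/
abbrev VarIdx (r m : ℕ) (nn : Fin (r + 1) → ℕ) : Type :=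
  (Σ i : Fin (r + 1), Fin (nn i)) ⊕ Fin m

variable (𝕂 : Type) [Field 𝕂]

/-- The monomial `T_i^{l_i} = ∏_j T_{ij}^{l_{ij}}`. -/
def Tmon (r m : ℕ) (nn : Fin (r + 1) → ℕ)
    (l : ∀ i : Fin (r + 1), Fin (nn i) → ℕ) (i : Fin (r + 1)) :
    MvPolynomial (VarIdx r m nn) 𝕂 :=
  ∏ j : Fin (nn i), (X (Sum.inl ⟨i, j⟩) : MvPolynomial (VarIdx r m nn) 𝕂) ^ l i j

/-- The map sending a column index of the `(c+2)×(c+2)` matrix defining `g_t`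
to the corresponding column index of `A`, namely `0, …, c, c + (t+1)`. -/
def colOf (r c : ℕ) (hcr : c ≤ r) (t : Fin (r - c)) (p : Fin (c + 2)) : Fin (r + 1) :=
  if h : (p : ℕ) ≤ c then ⟨p, by omega⟩
  else ⟨c + 1 + t, by have := t.isLt; omega⟩

/-- The polynomial `g_t`: the determinant of the `(c+2)×(c+2)` matrix whose first
`c+1` rows are formed by the columns `a_0, …, a_c, a_{c+t}` of `A` (as constant
polynomials) and whose last row is `(T_0^{l_0}, …, T_c^{l_c}, T_{c+t}^{l_{c+t}})`. -/
def gPoly (r c m : ℕ) (hcr : c ≤ r) (nn : Fin (r + 1) → ℕ)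
    (l : ∀ i : Fin (r + 1), Fin (nn i) → ℕ)
    (A : Matrix (Fin (c + 1)) (Fin (r + 1)) 𝕂) (t : Fin (r - c)) :
    MvPolynomial (VarIdx r m nn) 𝕂 :=
  Matrix.det (Matrix.of fun q p : Fin (c + 2) =>
    if h : (q : ℕ) < c + 1 then C (A ⟨q, h⟩ (colOf r c hcr t p))
    else Tmon 𝕂 r m nn l (colOf r c hcr t p))

/-- The ring `R = 𝕂[T_{ij}, S_k] / ⟨g_1, …, g_{r-c}⟩`. -/
abbrev RingAP (r c m : ℕ) (hcr : c ≤ r) (nn : Fin (r + 1) → ℕ)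
    (l : ∀ i : Fin (r + 1), Fin (nn i) → ℕ)
    (A : Matrix (Fin (c + 1)) (Fin (r + 1)) 𝕂) : Type :=
  MvPolynomial (VarIdx r m nn) 𝕂 ⧸ Ideal.span (Set.range (gPoly 𝕂 r c m hcr nn l A))

end

noncomputable section
variable (𝕂 : Type) [Field 𝕂]

/-- A point `z ∈ 𝕂^{n+m}` is of big type if for every `i = 0,…,r` some
coordinate `z_{ij}` vanishes. -/
def BigType (r m : ℕ) (nn : Fin (r + 1) → ℕ) (z : VarIdx r m nn → 𝕂) : Prop :=
  ∀ i : Fin (r + 1), ∃ j : Fin (nn i), z (Sum.inl ⟨i, j⟩) = 0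

/-- A point `z ∈ 𝕂^{n+m}` is of leaf type if there is a set `I ⊆ {0,…,r}` with at most
`c` elements such that `z_{ij} = 0` implies `i ∈ I`. -/
def LeafType (r c m : ℕ) (nn : Fin (r + 1) → ℕ) (z : VarIdx r m nn → 𝕂) : Prop :=
  ∃ I : Finset (Fin (r + 1)), I.card ≤ c ∧
    ∀ (i : Fin (r + 1)) (j : Fin (nn i)), z (Sum.inl ⟨i, j⟩) = 0 → i ∈ I

/-- The Jacobian matrix of `g_1, …, g_{r-c}` evaluated at the point `z`. -/
def Jac (r c m : ℕ) (hcr : c ≤ r) (nn : Fin (r + 1) → ℕ)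
    (l : ∀ i : Fin (r + 1), Fin (nn i) → ℕ)
    (A : Matrix (Fin (c + 1)) (Fin (r + 1)) 𝕂) (z : VarIdx r m nn → 𝕂) :
    Matrix (Fin (r - c)) (VarIdx r m nn) 𝕂 :=
  Matrix.of fun t v =>
    MvPolynomial.eval z (MvPolynomial.pderiv v (gPoly 𝕂 r c m hcr nn l A t))

end

noncomputable section
namespace St14

open MvPolynomial Matrix Finset

variable {𝕂 : Type} [Field 𝕂]

/-- Product rule for `pderiv` over a finite product. -/
lemma pderiv_finset_prod {σ ι : Type*} [DecidableEq ι] (v : σ)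
    (s : Finset ι) (f : ι → MvPolynomial σ 𝕂) :
    pderiv v (∏ j ∈ s, f j) = ∑ j ∈ s, pderiv v (f j) * ∏ k ∈ s.erase j, f k := by
  classical
  induction s using Finset.induction_on with
  | empty => simp
  | @insert a s ha ih =>
    rw [Finset.prod_insert ha, pderiv_mul, ih, Finset.sum_insert ha, Finset.erase_insert ha,
      Finset.mul_sum]
    congr 1
    refine Finset.sum_congr rfl fun j hj => ?_
    have hja : j ≠ a := fun h => ha (h ▸ hj)
    rw [Finset.erase_insert_of_ne (Ne.symm hja), Finset.prod_insert (fun h => ha (Finset.erase_subset _ _ h))]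
    ring

/-- Laplace expansion along the last row of a "bordered" matrix. -/
lemma det_border {R : Type*} [CommRing R] {k : ℕ} (f : Fin (k + 1) → Fin (k + 2) → R)
    (w : Fin (k + 2) → R) :
    Matrix.det (Matrix.of fun q p : Fin (k + 2) =>
      if h : (q : ℕ) < k + 1 then f ⟨q, h⟩ p else w p)
    = ∑ p : Fin (k + 2), (-1 : R) ^ (k + 1 + (p : ℕ)) * w p *
        Matrix.det (Matrix.of fun q q' : Fin (k + 1) => f q (p.succAbove q')) := by
  rw [Matrix.det_succ_row _ (Fin.last (k + 1))]
  refine Finset.sum_congr rfl fun p _ => ?_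
  have h1 : ¬ ((Fin.last (k + 1) : Fin (k + 2)) : ℕ) < k + 1 := by simp
  have e1 : (Matrix.of fun q p : Fin (k + 2) =>
      if h : (q : ℕ) < k + 1 then f ⟨q, h⟩ p else w p) (Fin.last (k + 1)) p = w p := by
    simp [h1]
  have e2 : ((Matrix.of fun q p : Fin (k + 2) =>
      if h : (q : ℕ) < k + 1 then f ⟨q, h⟩ p else w p).submatrix
        (Fin.last (k + 1)).succAbove p.succAbove)
      = Matrix.of fun q q' : Fin (k + 1) => f q (p.succAbove q') := by
    ext q q'
    simp only [Matrix.submatrix_apply, Fin.succAbove_last, Matrix.of_apply]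
    rw [dif_pos (by simpa using q.isLt)]
    simp
  rw [e1, e2, Fin.val_last]

variable {r c m : ℕ}

/-- The signed `(c+1)×(c+1)` minor coefficients. -/
def Emin (hcr : c ≤ r) (A : Matrix (Fin (c + 1)) (Fin (r + 1)) 𝕂)
    (t : Fin (r - c)) (p : Fin (c + 2)) : 𝕂 :=
  (-1 : 𝕂) ^ (c + 1 + (p : ℕ)) *
    Matrix.det (Matrix.of fun q q' : Fin (c + 1) => A q (colOf r c hcr t (p.succAbove q')))

def tailI (hcr : c ≤ r) (t : Fin (r - c)) : Fin (r + 1) := ⟨c + 1 + t, by have := t.isLt; omega⟩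

def headI (hcr : c ≤ r) (q : Fin (c + 1)) : Fin (r + 1) := ⟨q, by have := q.isLt; omega⟩

/-- The coefficient of the Jacobian: coefficient of index `i` in row `t`. -/
def ecoef (hcr : c ≤ r) (A : Matrix (Fin (c + 1)) (Fin (r + 1)) 𝕂)
    (t : Fin (r - c)) (i : Fin (r + 1)) : 𝕂 :=
  if h : (i : ℕ) ≤ c then Emin hcr A t ⟨i, by omega⟩
  else if (i : ℕ) = c + 1 + t then Emin hcr A t (Fin.last (c + 1)) else 0

lemma colOf_val (hcr : c ≤ r) (t : Fin (r - c)) (p : Fin (c + 2)) :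
    ((colOf r c hcr t p : Fin (r + 1)) : ℕ) = if (p : ℕ) ≤ c then (p : ℕ) else c + 1 + t := by
  unfold colOf; split <;> simp

lemma colOf_inj (hcr : c ≤ r) (t : Fin (r - c)) : Function.Injective (colOf r c hcr t) := by
  intro p p' h
  have h2 := congrArg Fin.val h
  rw [colOf_val, colOf_val] at h2
  have hp := p.isLt
  have hp' := p'.isLt
  apply Fin.ext
  split_ifs at h2 <;> omega

lemma ecoef_colOf (hcr : c ≤ r) (A : Matrix (Fin (c + 1)) (Fin (r + 1)) 𝕂)
    (t : Fin (r - c)) (p : Fin (c + 2)) :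
    ecoef hcr A t (colOf r c hcr t p) = Emin hcr A t p := by
  by_cases hp : (p : ℕ) ≤ c
  · have hcol : colOf r c hcr t p = ⟨(p : ℕ), by omega⟩ := by
      unfold colOf; rw [dif_pos hp]
    rw [hcol]
    unfold ecoef
    rw [dif_pos hp]
  · have hplast : p = Fin.last (c + 1) := by
      apply Fin.ext
      have := p.isLt
      simp only [Fin.val_last]
      omega
    subst hplast
    have hcol : colOf r c hcr t (Fin.last (c + 1)) = ⟨c + 1 + t, by have := t.isLt; omega⟩ := by
      unfold colOf; rw [dif_neg hp]
    rw [hcol]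
    unfold ecoef
    rw [dif_neg (show ¬ (c + 1 + (t : ℕ) ≤ c) by omega), if_pos rfl]

lemma ecoef_zero (hcr : c ≤ r) (A : Matrix (Fin (c + 1)) (Fin (r + 1)) 𝕂)
    (t : Fin (r - c)) (i : Fin (r + 1)) (h1 : ¬ (i : ℕ) ≤ c) (h2 : (i : ℕ) ≠ c + 1 + t) :
    ecoef hcr A t i = 0 := by
  unfold ecoef; rw [dif_neg h1, if_neg h2]

lemma ecoef_tail (hcr : c ≤ r) (A : Matrix (Fin (c + 1)) (Fin (r + 1)) 𝕂)
    (t : Fin (r - c)) : ecoef hcr A t (tailI hcr t) = Emin hcr A t (Fin.last (c + 1)) := by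
  unfold ecoef tailI
  rw [dif_neg (show ¬ (c + 1 + (t : ℕ) ≤ c) by omega), if_pos rfl]


variable {𝕂 : Type} [Field 𝕂] {r c m : ℕ} {nn : Fin (r + 1) → ℕ}

/-- Expansion of `gPoly` along its last row. -/
lemma gPoly_eq (hcr : c ≤ r) (l : ∀ i : Fin (r + 1), Fin (nn i) → ℕ)
    (A : Matrix (Fin (c + 1)) (Fin (r + 1)) 𝕂) (t : Fin (r - c)) :
    gPoly 𝕂 r c m hcr nn l A t
      = ∑ p : Fin (c + 2), C (Emin hcr A t p) * Tmon 𝕂 r m nn l (colOf r c hcr t p) := by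
  unfold gPoly
  rw [det_border (fun q p => C (A q (colOf r c hcr t p)))
    (fun p => Tmon 𝕂 r m nn l (colOf r c hcr t p))]
  refine Finset.sum_congr rfl fun p _ => ?_
  have hC : Matrix.det (Matrix.of fun q q' : Fin (c + 1) =>
        (C (A q (colOf r c hcr t (p.succAbove q'))) : MvPolynomial (VarIdx r m nn) 𝕂))
      = C (Matrix.det (Matrix.of fun q q' : Fin (c + 1) => A q (colOf r c hcr t (p.succAbove q')))) := by
    rw [RingHom.map_det]
    congr 1
  rw [hC]
  unfold Emin
  rw [_root_.map_mul, _root_.map_pow, _root_.map_neg, _root_.map_one]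
  ring

lemma eval_Tmon (l : ∀ i : Fin (r + 1), Fin (nn i) → ℕ) (z : VarIdx r m nn → 𝕂)
    (i : Fin (r + 1)) :
    eval z (Tmon 𝕂 r m nn l i) = ∏ j : Fin (nn i), z (Sum.inl ⟨i, j⟩) ^ l i j := by
  simp [Tmon]

lemma pderiv_Tmon_of_ne (l : ∀ i : Fin (r + 1), Fin (nn i) → ℕ) {v : VarIdx r m nn}
    {i : Fin (r + 1)} (hv : ∀ j : Fin (nn i), v ≠ Sum.inl ⟨i, j⟩) :
    pderiv v (Tmon 𝕂 r m nn l i) = 0 := by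
  classical
  unfold Tmon
  rw [pderiv_finset_prod]
  refine Finset.sum_eq_zero fun j _ => ?_
  rw [pderiv_pow, pderiv_X_of_ne (fun h => hv j h.symm)]
  ring

lemma eval_pderiv_Tmon (l : ∀ i : Fin (r + 1), Fin (nn i) → ℕ) (z : VarIdx r m nn → 𝕂)
    (i : Fin (r + 1)) (j : Fin (nn i)) :
    eval z (pderiv (Sum.inl ⟨i, j⟩) (Tmon 𝕂 r m nn l i))
      = (l i j : 𝕂) * z (Sum.inl ⟨i, j⟩) ^ (l i j - 1) *
          ∏ j' ∈ Finset.univ.erase j, z (Sum.inl ⟨i, j'⟩) ^ l i j' := by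
  classical
  unfold Tmon
  rw [pderiv_finset_prod, map_sum, Finset.sum_eq_single j]
  · rw [pderiv_pow, pderiv_X_self]
    simp [mul_comm, mul_assoc, mul_left_comm]
  · intro b _ hb
    have hne : (Sum.inl ⟨i, b⟩ : VarIdx r m nn) ≠ Sum.inl ⟨i, j⟩ := by
      simp [hb]
    rw [pderiv_pow, pderiv_X_of_ne hne]
    simp
  · simp

/-- Any `c+1` columns of `A` are linearly independent, as a family indexed by `Fin (c+1)`. -/
lemma LI_of_inj (A : Matrix (Fin (c + 1)) (Fin (r + 1)) 𝕂)
    (hA : ∀ s : Finset (Fin (r + 1)), s.card = c + 1 →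
      LinearIndependent 𝕂 fun j : s => A.transpose (j : Fin (r + 1)))
    {g : Fin (c + 1) → Fin (r + 1)} (hg : Function.Injective g) :
    LinearIndependent 𝕂 fun q' : Fin (c + 1) => A.transpose (g q') := by
  classical
  have hs : (Finset.univ.image g).card = c + 1 := by
    rw [Finset.card_image_of_injective _ hg, Finset.card_univ, Fintype.card_fin]
  have hli := hA _ hs
  have hcomp : (fun q' : Fin (c + 1) => A.transpose (g q'))
      = (fun j : (Finset.univ.image g : Finset (Fin (r + 1))) => A.transpose (j : Fin (r + 1)))
        ∘ (fun q' : Fin (c + 1) => (⟨g q', Finset.mem_image_of_mem g (Finset.mem_univ q')⟩ :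
            (Finset.univ.image g : Finset (Fin (r + 1))))) := rfl
  rw [hcomp]
  exact hli.comp _ (fun a b hab => hg (by simpa using congrArg Subtype.val hab))

lemma subdet_ne_zero (A : Matrix (Fin (c + 1)) (Fin (r + 1)) 𝕂)
    (hA : ∀ s : Finset (Fin (r + 1)), s.card = c + 1 →
      LinearIndependent 𝕂 fun j : s => A.transpose (j : Fin (r + 1)))
    {g : Fin (c + 1) → Fin (r + 1)} (hg : Function.Injective g) :
    Matrix.det (Matrix.of fun q q' : Fin (c + 1) => A q (g q')) ≠ 0 := by
  have hli : LinearIndependent 𝕂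
      (fun q' : Fin (c + 1) => (Matrix.of fun q q' : Fin (c + 1) => A q (g q'))ᵀ q') := by
    have : (fun q' : Fin (c + 1) => (Matrix.of fun q q' : Fin (c + 1) => A q (g q'))ᵀ q')
        = fun q' : Fin (c + 1) => A.transpose (g q') := by
      funext q'; ext q; rfl
    rw [this]
    exact LI_of_inj A hA hg
  change LinearIndependent 𝕂 (Matrix.of fun q q' : Fin (c + 1) => A q (g q')).col at hli
  rw [Matrix.linearIndependent_cols_iff_isUnit, Matrix.isUnit_iff_isUnit_det,
    isUnit_iff_ne_zero] at hli
  exact hli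

lemma Emin_ne_zero (hcr : c ≤ r) (A : Matrix (Fin (c + 1)) (Fin (r + 1)) 𝕂)
    (hA : ∀ s : Finset (Fin (r + 1)), s.card = c + 1 →
      LinearIndependent 𝕂 fun j : s => A.transpose (j : Fin (r + 1)))
    (t : Fin (r - c)) (p : Fin (c + 2)) : Emin hcr A t p ≠ 0 := by
  unfold Emin
  exact mul_ne_zero (pow_ne_zero _ (neg_ne_zero.mpr one_ne_zero))
    (subdet_ne_zero A hA ((colOf_inj hcr t).comp (Fin.succAbove_right_injective (p := p))))

/-- Sums against `ecoef` reduce to sums over the `c+2` relevant columns. -/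
lemma sum_ecoef (hcr : c ≤ r) (A : Matrix (Fin (c + 1)) (Fin (r + 1)) 𝕂)
    (t : Fin (r - c)) (y : Fin (r + 1) → 𝕂) :
    ∑ i : Fin (r + 1), ecoef hcr A t i * y i
      = ∑ p : Fin (c + 2), Emin hcr A t p * y (colOf r c hcr t p) := by
  classical
  have h1 : ∑ i : Fin (r + 1), ecoef hcr A t i * y i
      = ∑ i ∈ Finset.univ.image (colOf r c hcr t), ecoef hcr A t i * y i := by
    refine (Finset.sum_subset (Finset.subset_univ _) fun i _ hi => ?_).symm
    have h2 : ¬ (i : ℕ) ≤ c := by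
      intro hle
      refine hi (Finset.mem_image.mpr ⟨⟨(i : ℕ), by omega⟩, Finset.mem_univ _, ?_⟩)
      unfold colOf
      rw [dif_pos (show ((⟨(i : ℕ), by omega⟩ : Fin (c + 2)) : ℕ) ≤ c from hle)]
    have h3 : (i : ℕ) ≠ c + 1 + t := by
      intro heq
      refine hi (Finset.mem_image.mpr ⟨Fin.last (c + 1), Finset.mem_univ _, ?_⟩)
      unfold colOf
      rw [dif_neg (show ¬ ((Fin.last (c + 1) : Fin (c + 2)) : ℕ) ≤ c by simp)]
      exact Fin.ext heq.symm
    rw [ecoef_zero hcr A t i h2 h3, zero_mul]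
  rw [h1, Finset.sum_image (fun p _ p' _ h => colOf_inj hcr t h)]
  exact Finset.sum_congr rfl fun p _ => by rw [ecoef_colOf]

/-- The cofactor relation: each row of `A` is orthogonal to the `ecoef` vector. -/
lemma ecoef_rel (hcr : c ≤ r) (A : Matrix (Fin (c + 1)) (Fin (r + 1)) 𝕂)
    (t : Fin (r - c)) (q : Fin (c + 1)) :
    ∑ i : Fin (r + 1), ecoef hcr A t i * A q i = 0 := by
  rw [sum_ecoef]
  have hdet := det_border (fun q' p => A q' (colOf r c hcr t p))
    (fun p => A q (colOf r c hcr t p))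
  have hzero : Matrix.det (Matrix.of fun q' p : Fin (c + 2) =>
      if h : (q' : ℕ) < c + 1 then A ⟨q', h⟩ (colOf r c hcr t p)
      else A q (colOf r c hcr t p)) = 0 := by
    refine Matrix.det_zero_of_row_eq (i := (⟨(q : ℕ), by omega⟩ : Fin (c + 2)))
      (j := Fin.last (c + 1)) ?_ ?_
    · intro h
      have h2 := congrArg Fin.val h
      simp only [Fin.val_last] at h2
      have := q.isLt
      omega
    · funext p
      simp only [Matrix.of_apply]
      rw [dif_pos (show ((⟨(q : ℕ), by omega⟩ : Fin (c + 2)) : ℕ) < c + 1 from by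
          simpa using q.isLt),
        dif_neg (show ¬ ((Fin.last (c + 1) : Fin (c + 2)) : ℕ) < c + 1 by simp)]
  rw [hdet] at hzero
  rw [← hzero]
  refine Finset.sum_congr rfl fun p _ => ?_
  unfold Emin
  ring

/-- Characterization of the vanishing of the gradient of `Tmon i`. -/
lemma grad_zero_iff [CharZero 𝕂] (l : ∀ i : Fin (r + 1), Fin (nn i) → ℕ)
    (hl : ∀ i j, 0 < l i j) (hnn : ∀ i, 0 < nn i)
    (z : VarIdx r m nn → 𝕂) (i : Fin (r + 1)) :
    (∀ j, eval z (pderiv (Sum.inl ⟨i, j⟩) (Tmon 𝕂 r m nn l i)) = 0) ↔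
      ((∃ j : Fin (nn i), z (Sum.inl ⟨i, j⟩) = 0 ∧ 2 ≤ l i j) ∨
       (∃ j j' : Fin (nn i), j ≠ j' ∧ z (Sum.inl ⟨i, j⟩) = 0 ∧
          z (Sum.inl ⟨i, j'⟩) = 0 ∧ l i j = 1 ∧ l i j' = 1)) := by
  classical
  constructor
  · intro h
    by_contra hno
    push_neg at hno
    obtain ⟨hA', hB'⟩ := hno
    have hone : ∀ j, z (Sum.inl ⟨i, j⟩) = 0 → l i j = 1 := fun j hj => by
      have h1 := hA' j hj
      have h2 := hl i j
      omega
    have hkey : ∀ j : Fin (nn i), ∃ k, k ≠ j ∧ z (Sum.inl ⟨i, k⟩) = 0 := by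
      intro j
      have hj := h j
      rw [eval_pderiv_Tmon] at hj
      rcases mul_eq_zero.mp hj with h0 | hprod
      · rcases mul_eq_zero.mp h0 with hcast | hpow
        · have hlz : l i j = 0 := by exact_mod_cast hcast
          have := hl i j
          omega
        · have hz0 := pow_eq_zero_iff'.mp hpow
          have := hone j hz0.1
          omega
      · obtain ⟨k, hk, hzk⟩ := Finset.prod_eq_zero_iff.mp hprod
        exact ⟨k, (Finset.mem_erase.mp hk).1,
          (pow_eq_zero_iff (show l i k ≠ 0 from by have := hl i k; omega)).mp hzk⟩
    obtain ⟨k, hk0, hzk⟩ := hkey ⟨0, hnn i⟩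
    obtain ⟨k', hkk', hzk'⟩ := hkey k
    exact (hB' k' k hkk' hzk' hzk (hone k' hzk')) (hone k hzk)
  · intro h j
    rw [eval_pderiv_Tmon]
    rcases h with ⟨j0, hz0, hl2⟩ | ⟨j0, j1, hne, hz0, hz1, _, _⟩
    · by_cases hj : j = j0
      · subst hj
        rw [hz0, zero_pow (by omega)]
        ring
      · rw [Finset.prod_eq_zero (Finset.mem_erase.mpr ⟨fun hh => hj hh.symm, Finset.mem_univ j0⟩)
          (by rw [hz0, zero_pow (show l i j0 ≠ 0 from by have := hl i j0; omega)])]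
        ring
    · by_cases hj : j = j0
      · subst hj
        rw [Finset.prod_eq_zero (Finset.mem_erase.mpr ⟨Ne.symm hne, Finset.mem_univ j1⟩)
          (by rw [hz1, zero_pow (show l i j1 ≠ 0 from by have := hl i j1; omega)])]
        ring
      · rw [Finset.prod_eq_zero (Finset.mem_erase.mpr ⟨fun hh => hj hh.symm, Finset.mem_univ j0⟩)
          (by rw [hz0, zero_pow (show l i j0 ≠ 0 from by have := hl i j0; omega)])]
        ring

/-- A matrix with `k` rows has rank `< k` iff its rows are linearly dependent. -/
lemma rank_lt_iff {k : ℕ} {n : Type*} [Fintype n] (M : Matrix (Fin k) n 𝕂) :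
    M.rank < k ↔ ¬ LinearIndependent 𝕂 (fun t : Fin k => M t) := by
  constructor
  · intro h hli
    rw [hli.rank_matrix] at h
    simp at h
  · intro h
    rcases lt_or_eq_of_le (M.rank_le_card_height.trans (Fintype.card_fin k).le) with h' | h'
    · exact h'
    · refine absurd (linearIndependent_iff_card_eq_finrank_span.mpr ?_) h
      unfold Set.finrank
      change Fintype.card (Fin k) = Module.finrank 𝕂 (Submodule.span 𝕂 (Set.range M.row))
      rw [← Matrix.rank_eq_finrank_span_row M, h', Fintype.card_fin]

lemma exists_ker {α β : Type*} [Fintype α] [Fintype β] (hlt : Fintype.card β < Fintype.card α)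
    (f : α → β → 𝕂) : ∃ ν : α → 𝕂, ν ≠ 0 ∧ ∀ b, ∑ a, ν a * f a b = 0 := by
  classical
  let Φ : (α → 𝕂) →ₗ[𝕂] (β → 𝕂) :=
    { toFun := fun ν b => ∑ a, ν a * f a b
      map_add' := fun x y => by
        funext b
        simp [add_mul, Finset.sum_add_distrib]
      map_smul' := fun a x => by
        funext b
        simp [Finset.mul_sum, mul_assoc] }
  have hni : ¬ Function.Injective Φ := by
    intro hinj
    have hle := LinearMap.finrank_le_finrank_of_injective hinj
    rw [Module.finrank_fintype_fun_eq_card, Module.finrank_fintype_fun_eq_card] at hle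
    omega
  rw [← LinearMap.ker_eq_bot] at hni
  obtain ⟨ν, hmem, hne⟩ := (Submodule.ne_bot_iff _).mp hni
  exact ⟨ν, hne, fun b => congrFun (LinearMap.mem_ker.mp hmem) b⟩

lemma coeff_zero (hcr : c ≤ r) (A : Matrix (Fin (c + 1)) (Fin (r + 1)) 𝕂)
    (hA : ∀ s : Finset (Fin (r + 1)), s.card = c + 1 →
      LinearIndependent 𝕂 fun j : s => A.transpose (j : Fin (r + 1)))
    (W : Finset (Fin (r + 1))) (hW : W.card ≤ c + 1)
    (coeff : Fin (r + 1) → 𝕂) (hsupp : ∀ i, coeff i ≠ 0 → i ∈ W)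
    (hrel : ∀ q : Fin (c + 1), ∑ i : Fin (r + 1), coeff i * A q i = 0) :
    ∀ i, coeff i = 0 := by
  classical
  obtain ⟨W', hWsub, hW'univ, hW'⟩ := Finset.exists_subsuperset_card_eq (Finset.subset_univ W) hW
      (by rw [Finset.card_univ, Fintype.card_fin]; omega)
  have hli := hA W' hW'
  rw [Fintype.linearIndependent_iff] at hli
  have hsum : ∑ j : W', coeff (j : Fin (r + 1)) • A.transpose (j : Fin (r + 1)) = 0 := by
    rw [Finset.sum_coe_sort W' (fun i => coeff i • A.transpose i)]
    have hext : ∑ i ∈ W', coeff i • A.transpose i = ∑ i : Fin (r + 1), coeff i • A.transpose i :=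
      Finset.sum_subset (Finset.subset_univ _) fun i _ hi => by
        rw [show coeff i = 0 from by_contra fun hc => hi (hWsub (hsupp i hc)), zero_smul]
    rw [hext]
    funext q
    simp only [Finset.sum_apply, Pi.smul_apply, Matrix.transpose_apply, smul_eq_mul, Pi.zero_apply]
    exact hrel q
  intro i
  by_cases hc : coeff i = 0
  · exact hc
  · exact hli (fun j => coeff (j : Fin (r + 1))) hsum ⟨i, hWsub (hsupp i hc)⟩

end St14

end

set_option maxHeartbeats 1600000 in
/-- For `z ∈ X̄`, the Jacobian `J(z)` has rank `< r−c` iff `z` is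
of big type and there are `c+2` indices `i` each of which admits either a vanishing
coordinate `z_{ij}` with `l_{ij} ≥ 2`, or two distinct vanishing coordinates
`z_{ij} = z_{ij'} = 0` with `l_{ij} = l_{ij'} = 1`. -/
theorem statement_14
    (𝕂 : Type) [Field 𝕂] [IsAlgClosed 𝕂] [CharZero 𝕂]
    (r c m : ℕ) (hc : 0 < c) (hcr : c ≤ r)
    (nn : Fin (r + 1) → ℕ) (hnn : ∀ i, 0 < nn i)
    (l : ∀ i : Fin (r + 1), Fin (nn i) → ℕ) (hl : ∀ i j, 0 < l i j)
    (A : Matrix (Fin (c + 1)) (Fin (r + 1)) 𝕂)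
    (hA : ∀ s : Finset (Fin (r + 1)), s.card = c + 1 →
      LinearIndependent 𝕂 fun j : s => A.transpose (j : Fin (r + 1)))
    (z : VarIdx r m nn → 𝕂)
    (hz : ∀ t : Fin (r - c), MvPolynomial.eval z (gPoly 𝕂 r c m hcr nn l A t) = 0) :
    (Jac 𝕂 r c m hcr nn l A z).rank < r - c ↔
      (BigType 𝕂 r m nn z ∧
        ∃ I : Finset (Fin (r + 1)), I.card = c + 2 ∧
          ∀ i ∈ I,
            (∃ j : Fin (nn i), z (Sum.inl ⟨i, j⟩) = 0 ∧ 2 ≤ l i j) ∨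
            (∃ j j' : Fin (nn i), j ≠ j' ∧ z (Sum.inl ⟨i, j⟩) = 0 ∧
              z (Sum.inl ⟨i, j'⟩) = 0 ∧ l i j = 1 ∧ l i j' = 1)) := by
  classical
  -- local abbreviations
  let gr : (i : Fin (r + 1)) → Fin (nn i) → 𝕂 := fun i j =>
    MvPolynomial.eval z (MvPolynomial.pderiv (Sum.inl ⟨i, j⟩) (Tmon 𝕂 r m nn l i))
  let Zs : Finset (Fin (r + 1)) := Finset.univ.filter (fun i => ∀ j, gr i j = 0)
  let u : Fin (r + 1) → 𝕂 := fun i => MvPolynomial.eval z (Tmon 𝕂 r m nn l i)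
  -- Jacobian entries
  have hJac : ∀ (t : Fin (r - c)) (v : VarIdx r m nn),
      Jac 𝕂 r c m hcr nn l A z t v
        = ∑ p : Fin (c + 2), St14.Emin hcr A t p *
            MvPolynomial.eval z (MvPolynomial.pderiv v (Tmon 𝕂 r m nn l (colOf r c hcr t p))) := by
    intro t v
    show MvPolynomial.eval z (MvPolynomial.pderiv v (gPoly 𝕂 r c m hcr nn l A t)) = _
    rw [St14.gPoly_eq hcr l A t, map_sum, map_sum]
    refine Finset.sum_congr rfl fun p _ => ?_
    rw [MvPolynomial.pderiv_C_mul, _root_.map_mul, MvPolynomial.eval_C]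
  have hJacS : ∀ (t : Fin (r - c)) (k : Fin m), Jac 𝕂 r c m hcr nn l A z t (Sum.inr k) = 0 := by
    intro t k
    rw [hJac]
    refine Finset.sum_eq_zero fun p _ => ?_
    rw [St14.pderiv_Tmon_of_ne l (fun j' => by simp), map_zero, mul_zero]
  have hJacT : ∀ (t : Fin (r - c)) (i : Fin (r + 1)) (j : Fin (nn i)),
      Jac 𝕂 r c m hcr nn l A z t (Sum.inl ⟨i, j⟩) = St14.ecoef hcr A t i * gr i j := by
    intro t i j
    rw [hJac]
    have key : ∀ p : Fin (c + 2),
        St14.Emin hcr A t p * MvPolynomial.eval z (MvPolynomial.pderiv (Sum.inl ⟨i, j⟩)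
            (Tmon 𝕂 r m nn l (colOf r c hcr t p)))
          = if colOf r c hcr t p = i then St14.Emin hcr A t p * gr i j else 0 := by
      intro p
      by_cases hp : colOf r c hcr t p = i
      · rw [if_pos hp, hp]
      · have hzero : MvPolynomial.pderiv (Sum.inl ⟨i, j⟩)
            (Tmon 𝕂 r m nn l (colOf r c hcr t p)) = 0 :=
          St14.pderiv_Tmon_of_ne (i := colOf r c hcr t p) l
            (fun j' h => hp (congrArg Sigma.fst (Sum.inl.inj h)).symm)
        rw [if_neg hp, hzero, map_zero, mul_zero]
    rw [Finset.sum_congr rfl (fun p _ => key p)]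
    by_cases hi : (i : ℕ) ≤ c
    · have hcol : colOf r c hcr t ⟨(i : ℕ), by omega⟩ = i := by
        apply Fin.ext
        rw [St14.colOf_val]
        exact if_pos hi
      rw [Finset.sum_eq_single (⟨(i : ℕ), by omega⟩ : Fin (c + 2))
        (fun p _ hp => if_neg (fun hcp => hp (St14.colOf_inj hcr t (hcp.trans hcol.symm))))
        (fun habs => absurd (Finset.mem_univ _) habs), if_pos hcol]
      congr 1
      unfold St14.ecoef
      rw [dif_pos hi]
    · by_cases hit : (i : ℕ) = c + 1 + (t : ℕ)
      · have hcol : colOf r c hcr t (Fin.last (c + 1)) = i := by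
          apply Fin.ext
          rw [St14.colOf_val]
          rw [if_neg (show ¬ ((Fin.last (c + 1) : Fin (c + 2)) : ℕ) ≤ c by simp)]
          omega
        rw [Finset.sum_eq_single (Fin.last (c + 1))
          (fun p _ hp => if_neg (fun hcp => hp (St14.colOf_inj hcr t (hcp.trans hcol.symm))))
          (fun habs => absurd (Finset.mem_univ _) habs), if_pos hcol]
        congr 1
        unfold St14.ecoef
        rw [dif_neg hi, if_pos hit]
      · rw [St14.ecoef_zero hcr A t i hi hit, zero_mul]
        refine Finset.sum_eq_zero fun p _ => ?_
        refine if_neg (fun hcp => ?_)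
        have hv := congrArg Fin.val hcp
        rw [St14.colOf_val] at hv
        split_ifs at hv <;> omega
  -- values of the monomials on Z̄ points
  have hZsub : ∀ i ∈ Zs, ∃ j : Fin (nn i), z (Sum.inl ⟨i, j⟩) = 0 := by
    intro i hi
    have hP := (St14.grad_zero_iff l hl hnn z i).mp (fun j => (Finset.mem_filter.mp hi).2 j)
    rcases hP with ⟨j, hj, _⟩ | ⟨j, j', _, hj, _, _, _⟩
    · exact ⟨j, hj⟩
    · exact ⟨j, hj⟩
  have hu0 : ∀ i ∈ Zs, u i = 0 := by
    intro i hi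
    obtain ⟨j, hj⟩ := hZsub i hi
    show MvPolynomial.eval z (Tmon 𝕂 r m nn l i) = 0
    rw [St14.eval_Tmon]
    exact Finset.prod_eq_zero (Finset.mem_univ j)
      (by rw [hj]; exact zero_pow (show l i j ≠ 0 from by have := hl i j; omega))
  have hR2 : ∀ t : Fin (r - c), ∑ i : Fin (r + 1), St14.ecoef hcr A t i * u i = 0 := by
    intro t
    have hzt := hz t
    rw [St14.gPoly_eq hcr l A t, map_sum] at hzt
    rw [St14.sum_ecoef, ← hzt]
    refine Finset.sum_congr rfl fun p _ => ?_
    rw [_root_.map_mul, MvPolynomial.eval_C]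
  have hinj_head : Function.Injective (St14.headI (r := r) (c := c) hcr) :=
    fun a b hab => Fin.ext (by have h2 := congrArg Fin.val hab; exact h2)
  -- Big type from many vanishing gradients
  have hBig : c + 2 ≤ Zs.card → BigType 𝕂 r m nn z := by
    intro hZc
    have hLIhead := St14.LI_of_inj A hA hinj_head
    have hcardeq : Fintype.card (Fin (c + 1)) = Module.finrank 𝕂 (Fin (c + 1) → 𝕂) := by
      rw [Module.finrank_fintype_fun_eq_card]
    let b := basisOfLinearIndependentOfCardEqFinrank hLIhead hcardeq
    have hb : ⇑b = fun q => A.transpose (St14.headI hcr q) :=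
      coe_basisOfLinearIndependentOfCardEqFinrank _ _
    let ψ : (Fin (c + 1) → 𝕂) →ₗ[𝕂] 𝕂 := Module.Basis.constr b 𝕂 (fun q => u (St14.headI hcr q))
    have hψh : ∀ q, ψ (A.transpose (St14.headI hcr q)) = u (St14.headI hcr q) := by
      intro q
      have hbq : A.transpose (St14.headI hcr q) = b q := (congrFun hb q).symm
      rw [hbq]
      exact Module.Basis.constr_basis b 𝕂 _ q
    have hψall : ∀ i, ψ (A.transpose i) = u i := by
      intro i
      by_cases hi : (i : ℕ) ≤ c
      · have : i = St14.headI hcr ⟨(i : ℕ), by omega⟩ := Fin.ext rfl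
        rw [this]
        exact hψh _
      · have ht0lt : (i : ℕ) - (c + 1) < r - c := by have := i.isLt; omega
        set t0 : Fin (r - c) := ⟨(i : ℕ) - (c + 1), ht0lt⟩ with ht0def
        have htail : St14.tailI hcr t0 = i :=
          Fin.ext (show c + 1 + ((i : ℕ) - (c + 1)) = (i : ℕ) by omega)
        have hv : (∑ j : Fin (r + 1), St14.ecoef hcr A t0 j • A.transpose j) = 0 := by
          funext q
          simp only [Finset.sum_apply, Pi.smul_apply, Matrix.transpose_apply, smul_eq_mul,
            Pi.zero_apply]
          exact St14.ecoef_rel hcr A t0 q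
        have h1 : ∑ j : Fin (r + 1), St14.ecoef hcr A t0 j * ψ (A.transpose j) = 0 := by
          have h2 := congrArg ψ hv
          rw [map_sum, map_zero] at h2
          simpa only [map_smul, smul_eq_mul] using h2
        have h3 : ∑ j : Fin (r + 1), St14.ecoef hcr A t0 j * (ψ (A.transpose j) - u j) = 0 := by
          simp only [mul_sub, Finset.sum_sub_distrib, h1, hR2 t0, sub_zero]
        have hside : ∀ j1 : Fin (r + 1), j1 ≠ i →
            St14.ecoef hcr A t0 j1 * (ψ (A.transpose j1) - u j1) = 0 := by
          intro j1 hji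
          by_cases hj : (j1 : ℕ) ≤ c
          · have hh : j1 = St14.headI hcr ⟨(j1 : ℕ), by omega⟩ := Fin.ext rfl
            rw [hh, hψh, sub_self, mul_zero]
          · have hne : (j1 : ℕ) ≠ c + 1 + (t0 : ℕ) := by
              intro heq
              exact hji (Fin.ext (heq.trans (congrArg Fin.val htail)))
            rw [St14.ecoef_zero hcr A t0 j1 hj hne, zero_mul]
        rw [Finset.sum_eq_single i (fun j1 _ hji => hside j1 hji) (fun habs =>
          absurd (Finset.mem_univ _) habs)] at h3
        have he : St14.ecoef hcr A t0 i ≠ 0 := by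
          rw [← htail, St14.ecoef_tail]
          exact St14.Emin_ne_zero hcr A hA t0 _
        exact sub_eq_zero.mp ((mul_eq_zero.mp h3).resolve_left he)
    obtain ⟨K', hK'sub, hK'card⟩ := Finset.exists_subset_card_eq
      (show c + 1 ≤ Zs.card by omega)
    let g : Fin (c + 1) → Fin (r + 1) := fun q => ((K'.orderIsoOfFin hK'card q : K') : Fin (r + 1))
    have hginj : Function.Injective g := fun a b hab =>
      (K'.orderIsoOfFin hK'card).injective (Subtype.coe_injective hab)
    have hgmem : ∀ q, g q ∈ K' := fun q => (K'.orderIsoOfFin hK'card q).2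
    let b2 := basisOfLinearIndependentOfCardEqFinrank (St14.LI_of_inj A hA hginj) hcardeq
    have hb2 : ⇑b2 = fun q => A.transpose (g q) :=
      coe_basisOfLinearIndependentOfCardEqFinrank _ _
    have hψ0 : ψ = 0 := by
      refine Module.Basis.ext b2 fun q => ?_
      rw [congrFun hb2 q]
      rw [hψall (g q)]
      rw [hu0 (g q) (hK'sub (hgmem q))]
      simp
    intro i0
    have hu' : u i0 = 0 := by
      rw [← hψall i0, hψ0]
      simp
    have hu'' : ∏ j : Fin (nn i0), z (Sum.inl ⟨i0, j⟩) ^ l i0 j = 0 := by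
      rw [← St14.eval_Tmon l z i0]
      exact hu'
    obtain ⟨j, _, hj⟩ := Finset.prod_eq_zero_iff.mp hu''
    exact ⟨j, pow_eq_zero_iff (show l i0 j ≠ 0 from by have := hl i0 j; omega) |>.mp hj⟩
  -- forward direction: small rank forces many vanishing gradients
  have forward : (Jac 𝕂 r c m hcr nn l A z).rank < r - c → c + 2 ≤ Zs.card := by
    intro hrank
    have hli := (St14.rank_lt_iff _).mp hrank
    rw [Fintype.not_linearIndependent_iff] at hli
    obtain ⟨g, hgsum, t1, hgt1⟩ := hli
    have hcol : ∀ v : VarIdx r m nn, ∑ t, g t * Jac 𝕂 r c m hcr nn l A z t v = 0 := by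
      intro v
      have h0 := congrFun hgsum v
      simpa only [Finset.sum_apply, Pi.smul_apply, smul_eq_mul, Pi.zero_apply] using h0
    by_contra hZc
    push_neg at hZc
    have hZle : Zs.card ≤ c + 1 := by omega
    have claim1 : ∀ t : Fin (r - c), g t ≠ 0 → St14.tailI hcr t ∈ Zs := by
      intro t hgt
      refine Finset.mem_filter.mpr ⟨Finset.mem_univ _, fun j => ?_⟩
      have h0 := hcol (Sum.inl ⟨St14.tailI hcr t, j⟩)
      have hsum : ∑ t', g t' * Jac 𝕂 r c m hcr nn l A z t' (Sum.inl ⟨St14.tailI hcr t, j⟩)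
          = g t * (St14.ecoef hcr A t (St14.tailI hcr t) * gr (St14.tailI hcr t) j) := by
        have hterm : ∀ t', g t' * Jac 𝕂 r c m hcr nn l A z t' (Sum.inl ⟨St14.tailI hcr t, j⟩)
            = g t' * (St14.ecoef hcr A t' (St14.tailI hcr t) * gr (St14.tailI hcr t) j) :=
          fun t' => by rw [hJacT]
        rw [Finset.sum_congr rfl (fun t' _ => hterm t')]
        refine Finset.sum_eq_single t (fun t' _ htt' => ?_)
          (fun habs => absurd (Finset.mem_univ _) habs)
        rw [St14.ecoef_zero hcr A t' _ (show ¬ (c + 1 + (t : ℕ) ≤ c) by omega)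
          (show c + 1 + (t : ℕ) ≠ c + 1 + (t' : ℕ) from
            fun hh => htt' (Fin.ext (by omega)))]
        ring
      rw [hsum] at h0
      have he : St14.ecoef hcr A t (St14.tailI hcr t) ≠ 0 := by
        rw [St14.ecoef_tail]
        exact St14.Emin_ne_zero hcr A hA t _
      exact (mul_eq_zero.mp ((mul_eq_zero.mp h0).resolve_left hgt)).resolve_left he
    have claim2 : ∀ i : Fin (r + 1), (i : ℕ) ≤ c → i ∉ Zs →
        ∑ t, g t * St14.ecoef hcr A t i = 0 := by
      intro i hi hiZ
      have hex : ∃ j, gr i j ≠ 0 := by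
        by_contra hall
        push_neg at hall
        exact hiZ (Finset.mem_filter.mpr ⟨Finset.mem_univ _, hall⟩)
      obtain ⟨j, hj⟩ := hex
      have h0 := hcol (Sum.inl ⟨i, j⟩)
      have hfac : (∑ t, g t * St14.ecoef hcr A t i) * gr i j = 0 := by
        rw [Finset.sum_mul, ← h0]
        exact Finset.sum_congr rfl fun t _ => by rw [hJacT]; ring
      exact (mul_eq_zero.mp hfac).resolve_right hj
    have hsingle : ∀ t0 : Fin (r - c),
        ∑ t, g t * St14.ecoef hcr A t (St14.tailI hcr t0)
          = g t0 * St14.ecoef hcr A t0 (St14.tailI hcr t0) := by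
      intro t0
      refine Finset.sum_eq_single t0 (fun t _ htt => ?_)
        (fun habs => absurd (Finset.mem_univ _) habs)
      rw [St14.ecoef_zero hcr A t _ (show ¬ (c + 1 + (t0 : ℕ) ≤ c) by omega)
        (show c + 1 + (t0 : ℕ) ≠ c + 1 + (t : ℕ) from fun hh => htt (Fin.ext (by omega)))]
      ring
    have hsupp : ∀ i, (fun i => ∑ t, g t * St14.ecoef hcr A t i) i ≠ 0 → i ∈ Zs := by
      intro i hci0
      have hci : ∑ t, g t * St14.ecoef hcr A t i ≠ 0 := hci0
      clear hci0
      by_cases hi : (i : ℕ) ≤ c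
      · by_contra hiZ
        exact hci (claim2 i hi hiZ)
      · have ht0lt : (i : ℕ) - (c + 1) < r - c := by have := i.isLt; omega
        have htail : St14.tailI hcr ⟨(i : ℕ) - (c + 1), ht0lt⟩ = i :=
          Fin.ext (show c + 1 + ((i : ℕ) - (c + 1)) = (i : ℕ) by omega)
        rw [← htail] at hci ⊢
        rw [hsingle] at hci
        exact claim1 _ (fun h0 => hci (by rw [h0, zero_mul]))
    have hrel : ∀ q : Fin (c + 1),
        ∑ i, (fun i => ∑ t, g t * St14.ecoef hcr A t i) i * A q i = 0 := by
      intro q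
      have hswap : ∑ i, (∑ t, g t * St14.ecoef hcr A t i) * A q i
          = ∑ t, g t * ∑ i, St14.ecoef hcr A t i * A q i := by
        simp only [Finset.sum_mul, Finset.mul_sum]
        rw [Finset.sum_comm]
        exact Finset.sum_congr rfl fun t _ => Finset.sum_congr rfl fun i _ => by ring
      rw [hswap]
      simp only [St14.ecoef_rel hcr A, mul_zero]
      exact Finset.sum_const_zero
    have hall := St14.coeff_zero hcr A hA Zs hZle _ hsupp hrel
    have hzero := hall (St14.tailI hcr t1)
    rw [hsingle] at hzero
    exact (mul_ne_zero hgt1 (by rw [St14.ecoef_tail]; exact St14.Emin_ne_zero hcr A hA t1 _)) hzero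
  -- backward direction: many vanishing gradients force small rank
  have backward : c + 2 ≤ Zs.card → (Jac 𝕂 r c m hcr nn l A z).rank < r - c := by
    intro hZc
    set S0 : Finset (Fin (r - c)) := Finset.univ.filter (fun t => St14.tailI hcr t ∈ Zs) with hS0
    set Bf : Finset (Fin (r + 1)) := Finset.univ.filter (fun i => (i : ℕ) ≤ c ∧ i ∉ Zs) with hBfdef
    have hheads : (Finset.univ.filter (fun i : Fin (r + 1) => (i : ℕ) ≤ c)).card = c + 1 := by
      have himg : (Finset.univ.filter (fun i : Fin (r + 1) => (i : ℕ) ≤ c))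
          = Finset.univ.image (St14.headI hcr) := by
        ext i
        simp only [Finset.mem_filter, Finset.mem_univ, true_and, Finset.mem_image]
        constructor
        · intro hi
          exact ⟨⟨(i : ℕ), by omega⟩, Fin.ext rfl⟩
        · rintro ⟨q, rfl⟩
          exact (show (q : ℕ) ≤ c from by have := q.isLt; omega)
      rw [himg, Finset.card_image_of_injective _ hinj_head, Finset.card_univ, Fintype.card_fin]
    have hcount : Bf.card < S0.card := by
      have h1 : Zs.filter (fun i : Fin (r + 1) => (i : ℕ) ≤ c)
          ⊆ (Finset.univ.filter (fun i : Fin (r + 1) => (i : ℕ) ≤ c)) \ Bf := by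
        intro i hi
        rw [Finset.mem_sdiff]
        obtain ⟨hiZ, hile⟩ := Finset.mem_filter.mp hi
        exact ⟨Finset.mem_filter.mpr ⟨Finset.mem_univ _, hile⟩,
          fun hiB => ((Finset.mem_filter.mp hiB).2.2) hiZ⟩
      have h2 : Zs.filter (fun i : Fin (r + 1) => ¬ (i : ℕ) ≤ c) ⊆ S0.image (St14.tailI hcr) := by
        intro i hi
        obtain ⟨hiZ, hile⟩ := Finset.mem_filter.mp hi
        have ht0lt : (i : ℕ) - (c + 1) < r - c := by have := i.isLt; omega
        have hit : St14.tailI hcr ⟨(i : ℕ) - (c + 1), ht0lt⟩ = i :=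
          Fin.ext (show c + 1 + ((i : ℕ) - (c + 1)) = (i : ℕ) by omega)
        refine Finset.mem_image.mpr ⟨_, Finset.mem_filter.mpr ⟨Finset.mem_univ _, ?_⟩, hit⟩
        rw [hit]
        exact hiZ
      have hBsub : Bf ⊆ Finset.univ.filter (fun i : Fin (r + 1) => (i : ℕ) ≤ c) := by
        intro i hi
        exact Finset.mem_filter.mpr ⟨Finset.mem_univ _, (Finset.mem_filter.mp hi).2.1⟩
      have hBle : Bf.card ≤ c + 1 := hheads ▸ Finset.card_le_card hBsub
      have hsplit := Finset.card_filter_add_card_filter_not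
        (s := Zs) (p := fun i : Fin (r + 1) => (i : ℕ) ≤ c)
      have hc1 := Finset.card_le_card h1
      have hc2 := Finset.card_le_card h2
      have hc2' : (S0.image (St14.tailI hcr)).card ≤ S0.card := Finset.card_image_le
      have hsd : ((Finset.univ.filter (fun i : Fin (r + 1) => (i : ℕ) ≤ c)) \ Bf).card
          = (c + 1) - Bf.card := by
        rw [Finset.card_sdiff_of_subset hBsub, hheads]
      omega
    obtain ⟨ν, hν0, hνk⟩ := St14.exists_ker (𝕂 := 𝕂) (α := ↥S0) (β := ↥Bf)
      (by rw [Fintype.card_coe, Fintype.card_coe]; exact hcount)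
      (fun t i => St14.ecoef hcr A (t : Fin (r - c)) (i : Fin (r + 1)))
    let lam : Fin (r - c) → 𝕂 := fun t => if h : t ∈ S0 then ν ⟨t, h⟩ else 0
    have hlamS : ∀ t, t ∉ S0 → lam t = 0 := fun t ht => dif_neg ht
    have hlamB : ∀ i ∈ Bf, ∑ t, lam t * St14.ecoef hcr A t i = 0 := by
      intro i hi
      have h1 : ∑ t, lam t * St14.ecoef hcr A t i
          = ∑ t ∈ S0, lam t * St14.ecoef hcr A t i :=
        (Finset.sum_subset (Finset.subset_univ _) fun t _ ht => by
          rw [hlamS t ht, zero_mul]).symm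
      have h3 : ∑ a : ↥S0, lam (a : Fin (r - c)) * St14.ecoef hcr A (a : Fin (r - c)) i
          = ∑ a : ↥S0, ν a * St14.ecoef hcr A (a : Fin (r - c)) i :=
        Finset.sum_congr rfl (fun a _ => by
          rw [show lam (a : Fin (r - c)) = ν a from dif_pos a.2])
      rw [h1, ← Finset.sum_coe_sort S0 (fun t => lam t * St14.ecoef hcr A t i), h3]
      exact hνk ⟨i, hi⟩
    have hlamne : lam ≠ 0 := by
      obtain ⟨a, ha⟩ := Function.ne_iff.mp hν0
      intro hl0
      apply ha
      have h0 := congrFun hl0 (a : Fin (r - c))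
      rw [show lam (a : Fin (r - c)) = ν a from dif_pos a.2] at h0
      exact h0
    rw [St14.rank_lt_iff, Fintype.not_linearIndependent_iff]
    refine ⟨lam, ?_, Function.ne_iff.mp hlamne⟩
    funext v
    simp only [Finset.sum_apply, Pi.smul_apply, smul_eq_mul, Pi.zero_apply]
    cases v with
    | inr k =>
      refine Finset.sum_eq_zero fun t _ => ?_
      rw [hJacS t k, mul_zero]
    | inl x =>
      obtain ⟨i, j⟩ := x
      have hterm : ∀ t, lam t * Jac 𝕂 r c m hcr nn l A z t (Sum.inl ⟨i, j⟩)
          = lam t * (St14.ecoef hcr A t i * gr i j) := fun t => by rw [hJacT]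
      rw [Finset.sum_congr rfl (fun t _ => hterm t)]
      by_cases hiZ : i ∈ Zs
      · have hg0 : ∀ j', gr i j' = 0 := (Finset.mem_filter.mp hiZ).2
        exact Finset.sum_eq_zero fun t _ => by rw [hg0 j, mul_zero, mul_zero]
      · by_cases hi : (i : ℕ) ≤ c
        · have hiB : i ∈ Bf := Finset.mem_filter.mpr ⟨Finset.mem_univ _, hi, hiZ⟩
          have hfac : ∑ t, lam t * (St14.ecoef hcr A t i * gr i j)
              = (∑ t, lam t * St14.ecoef hcr A t i) * gr i j := by
            rw [Finset.sum_mul]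
            exact Finset.sum_congr rfl fun t _ => by ring
          rw [hfac, hlamB i hiB, zero_mul]
        · refine Finset.sum_eq_zero fun t _ => ?_
          by_cases hit : (i : ℕ) = c + 1 + (t : ℕ)
          · have htail : St14.tailI hcr t = i :=
              Fin.ext (show c + 1 + (t : ℕ) = (i : ℕ) by omega)
            have htS : t ∉ S0 := fun hts => hiZ (htail ▸ (Finset.mem_filter.mp hts).2)
            rw [hlamS t htS, zero_mul]
          · rw [St14.ecoef_zero hcr A t i hi hit, zero_mul, mul_zero]
  -- assembly
  constructor
  · intro hrank
    have hZc := forward hrank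
    refine ⟨hBig hZc, ?_⟩
    obtain ⟨I, hIsub, hIcard⟩ := Finset.exists_subset_card_eq hZc
    refine ⟨I, hIcard, fun i hi => ?_⟩
    exact (St14.grad_zero_iff l hl hnn z i).mp (fun j => (Finset.mem_filter.mp (hIsub hi)).2 j)
  · rintro ⟨hbig, I, hIcard, hI⟩
    apply backward
    have hIsub : I ⊆ Zs := fun i hi => Finset.mem_filter.mpr ⟨Finset.mem_univ _,
      (St14.grad_zero_iff l hl hnn z i).mpr (hI i hi)⟩
    calc c + 2 = I.card := hIcard.symm
      _ ≤ Zs.card := Finset.card_le_card hIsub
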